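/- arXiv:math/0506148 — 7 statements merged into one kernel-verified Lean document; each statement's English description precedes it below -/
import Mathlib

section
/- Let X be a connected topological space, E a finite-dimensional real normed vector space, and P : X → (E →L[ℝ] E) a continuous map such that (P x) ∘ (P x) = P x for every x ∈ X. Then the function x ↦ finrank ℝ (range (P x)) is constant on X; i.e., for all x, y ∈ X the ranges of P x and P y have the same dimension. -/
lemma nat_eq_of_abs_cast_lt_one {a b : ℕ} (h : |(a : ℝ) - (b : ℝ)| < 1) : a = b := by
  have h2 : |(((a : ℤ) - (b : ℤ) : ℤ) : ℝ)| < 1 := by push_cast; exact h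
  rw [← Int.cast_abs] at h2
  have h3 : |(a : ℤ) - (b : ℤ)| < 1 := by exact_mod_cast h2
  rw [abs_lt] at h3
  omega

/-- A continuous field of idempotent continuous linear endomorphisms (projectors)
of a finite-dimensional real normed vector space over a connected topological space
has constant range dimension. -/
theorem constant_rank_of_continuous_projectors
    {X : Type*} [TopologicalSpace X] [ConnectedSpace X]
    {E : Type*} [NormedAddCommGroup E] [NormedSpace ℝ E] [FiniteDimensional ℝ E]
    (P : X → E →L[ℝ] E) (hP : Continuous P)
    (hidem : ∀ x, (P x).comp (P x) = P x) :
    ∀ x y : X, Module.finrank ℝ (LinearMap.range (P x).toLinearMap) =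
      Module.finrank ℝ (LinearMap.range (P y).toLinearMap) := by
  -- each P x is a projection onto its range
  have hproj : ∀ x, LinearMap.IsProj (LinearMap.range (P x).toLinearMap)
      (P x).toLinearMap := by
    intro x
    refine ⟨fun v => ⟨v, rfl⟩, ?_⟩
    rintro v ⟨w, rfl⟩
    have h := congrArg ContinuousLinearMap.toLinearMap (hidem x)
    exact LinearMap.congr_fun h w
  -- trace equals rank
  have htr : ∀ x, LinearMap.trace ℝ E (P x).toLinearMap =
      (Module.finrank ℝ (LinearMap.range (P x).toLinearMap) : ℝ) :=
    fun x => (hproj x).trace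
  -- the trace function is continuous
  have hcont : Continuous fun x =>
      LinearMap.trace ℝ E (P x).toLinearMap := by
    have h1 : Continuous ((LinearMap.trace ℝ E).comp
        (ContinuousLinearMap.coeLM ℝ : (E →L[ℝ] E) →ₗ[ℝ] (E →ₗ[ℝ] E))) :=
      LinearMap.continuous_of_finiteDimensional _
    exact h1.comp hP
  intro x y
  set f : X → ℝ := fun x => LinearMap.trace ℝ E (P x).toLinearMap with hf
  have key : f y = f x := by
    have hclopen : IsClopen {z | f z = f x} := by
      constructor
      · exact isClosed_eq hcont continuous_const
      · rw [isOpen_iff_mem_nhds]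
        intro z hz
        have hmem : {w | f w ∈ Metric.ball (f z) (1/2)} ∈ nhds z :=
          hcont.continuousAt.preimage_mem_nhds
            (Metric.ball_mem_nhds _ (by norm_num))
        filter_upwards [hmem] with w hw
        have h1 : f w = (Module.finrank ℝ (LinearMap.range (P w).toLinearMap) : ℝ) := htr w
        have h2 : f z = (Module.finrank ℝ (LinearMap.range (P z).toLinearMap) : ℝ) := htr z
        have habs : |f w - f z| < 1/2 := by
          simpa [Real.dist_eq] using hw
        rw [h1, h2] at habs
        have heq : Module.finrank ℝ (LinearMap.range (P w).toLinearMap) =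
            Module.finrank ℝ (LinearMap.range (P z).toLinearMap) :=
          nat_eq_of_abs_cast_lt_one (habs.trans (by norm_num))
        show f w = f x
        rw [h1, heq, ← h2]
        exact hz
    have huniv : {z | f z = f x} = Set.univ := hclopen.eq_univ ⟨x, rfl⟩
    have : y ∈ {z | f z = f x} := huniv ▸ Set.mem_univ y
    exact this
  have key2 : (Module.finrank ℝ (LinearMap.range (P x).toLinearMap) : ℝ) =
      (Module.finrank ℝ (LinearMap.range (P y).toLinearMap) : ℝ) :=
    (htr x).symm.trans (key.symm.trans (htr y))
  exact_mod_cast key2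
end

section
/- With the projector-derivative setup below, the following equivalence holds (equations (assertion0) ⟺ (25) of the paper): (∀ a b c, M a b c = (1/p) * E a * P b c − (1/(n−p)) * W a * Π b c) if and only if (∀ a b c, (D b) a c = (1/(2p)) * (E a * P b c + E c * P a b) − (1/(2(n−p))) * (W a * Π b c + W c * Π b a)). -/
open Matrix

/-- Equivalence of equations (assertion0) and (25) of the paper:
`M_{abc} = (1/p) E_a P_{bc} - (1/(n-p)) W_a Π_{bc}` iff
`∇_b P_{ac} = (1/(2p))(E_a P_{bc} + E_c P_{ab}) - (1/(2(n-p)))(W_a Π_{bc} + W_c Π_{ba})`. -/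
theorem biconformal_assertion0_iff_25
    {n : ℕ} (hn : 1 ≤ n)
    (G P Q : Matrix (Fin n) (Fin n) ℝ)
    (hGsym : G.IsSymm) (hGinv : IsUnit G.det)
    (hPsym : P.IsSymm) (hQ : Q = G - P)
    (hPP : P * G⁻¹ * P = P) (hQQ : Q * G⁻¹ * Q = Q) (hPQ : P * G⁻¹ * Q = 0)
    (p : ℝ) (hp : p = (G⁻¹ * P).trace) (hp0 : p ≠ 0) (hnp : (n : ℝ) - p ≠ 0)
    (D : Fin n → Matrix (Fin n) (Fin n) ℝ) (hD : ∀ a, (D a).IsSymm)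
    (M : Fin n → Fin n → Fin n → ℝ)
    (hM : ∀ a b c, M a b c = D b a c + D c a b - D a b c)
    (E W : Fin n → ℝ)
    (hE : ∀ a, E a = ∑ b, ∑ c, M a b c * (G⁻¹ * P * G⁻¹) b c)
    (hW : ∀ a, W a = -∑ b, ∑ c, M a b c * (G⁻¹ * Q * G⁻¹) b c) :
    (∀ a b c, M a b c = (1 / p) * E a * P b c - (1 / ((n : ℝ) - p)) * W a * Q b c) ↔
    (∀ a b c, D b a c = (1 / (2 * p)) * (E a * P b c + E c * P a b)
      - (1 / (2 * ((n : ℝ) - p))) * (W a * Q b c + W c * Q b a)) := by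

  have hQsym : Q.IsSymm := by rw [hQ]; exact hGsym.sub hPsym
  have hDs : ∀ a i j, D a i j = D a j i := fun a i j => ((hD a).apply i j).symm
  have hPs : ∀ i j, P i j = P j i := fun i j => (hPsym.apply i j).symm
  have hQs : ∀ i j, Q i j = Q j i := fun i j => (hQsym.apply i j).symm
  constructor
  · intro h a b c
    have key : D b a c = (M a b c + M c a b) / 2 := by
      rw [hM, hM, hDs a c b, hDs b c a]; ring
    rw [key, h a b c, h c a b, hPs a b, hQs a b]
    field_simp
    ring
  · intro h a b c
    rw [hM, h a b c, h a c b, h b a c, hPs c b, hQs c b, hPs b a, hQs a c, hQs a b]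
    field_simp
    ring
end

section
/- With the curvature setup below, for all a, b one has L⁰ a b − L⁰ b a = (2*(2−p)/p) * Σ_{r,q} (Pm r q * R q r a b). (This is equation (uno) of the paper: L⁰_{ab} − L⁰_{ba} = (2(2−p)/p) P^r_q R̄^q_{rab}, obtained from the definition of L⁰ and the first Bianchi identity.) -/
open Matrix

/-- Equation (uno) of the paper: the antisymmetric part of `L⁰` satisfies
`L⁰_{ab} - L⁰_{ba} = (2(2-p)/p) P^r_q R̄^q_{rab}`. -/
theorem L0_antisymmetric_part
    {n : ℕ} (hn : 1 ≤ n)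
    (G P : Matrix (Fin n) (Fin n) ℝ)
    (hGsym : G.IsSymm) (hGinv : IsUnit G.det)
    (hPsym : P.IsSymm) (hPP : P * G⁻¹ * P = P)
    (Pm : Matrix (Fin n) (Fin n) ℝ) (hPm : Pm = G⁻¹ * P)
    (p : ℝ) (hp : p = Pm.trace) (hp0 : p ≠ 0) (hp1 : p ≠ 1)
    (R : Fin n → Fin n → Fin n → Fin n → ℝ)
    (hanti : ∀ a b c d, R a b c d = -R a b d c)
    (hbianchi : ∀ a b c d, R a b c d + R a c d b + R a d b c = 0)
    (F A : Fin n → Fin n → ℝ)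
    (hF : ∀ d b, F d b = ∑ r, ∑ q, Pm r q * R q r d b)
    (hA : ∀ c b, A c b = ∑ d, ∑ r, Pm d r * R r c d b)
    (R0 : ℝ) (hR0 : R0 = ∑ c, ∑ b, A c b * (G⁻¹ * P * G⁻¹) c b)
    (L0 : Fin n → Fin n → ℝ)
    (hL0 : ∀ b c, L0 b c = 2 * (A c b - (1 / p) *
      ((∑ d, Pm d c * F d b) + (∑ d, Pm d b * F d c) - F b c)) +
      (R0 / (1 - p)) * P b c) :
    ∀ a b, L0 a b - L0 b a = (2 * (2 - p) / p) * ∑ r, ∑ q, Pm r q * R q r a b := by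
  intro a b
  have hPab : P a b = P b a := (hPsym.apply a b).symm ▸ (hPsym.apply b a)
  have hFba : F b a = -F a b := by
    rw [hF, hF]
    have : ∀ r q : Fin n, Pm r q * R q r b a = -(Pm r q * R q r a b) := fun r q => by
      rw [hanti q r b a]; ring
    simp [this]
  have hAba : A b a = A a b - F a b := by
    rw [hA, hA, hF]
    have key : ∀ d r : Fin n, Pm d r * R r b d a
        = Pm d r * R r a d b - Pm d r * R r d a b := fun d r => by
      have h1 := hbianchi r a b d
      have h2 := hanti r a b d
      have h3 : R r b d a = R r a d b - R r d a b := by linarith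
      rw [h3]; ring
    simp [key, Finset.sum_sub_distrib]
  rw [hL0 a b, hL0 b a, hPab, hAba, hFba, ← hF a b]
  have h1p : (1 : ℝ) - p ≠ 0 := sub_ne_zero.mpr (fun h => hp1 h.symm)
  field_simp
  ring
end

section
/- Let ι be a type, p : ℝ with p ≠ 0 and p ≠ 3, and S : ι → ι → ι → ℝ a family satisfying, for all c, t, z ∈ ι, (S c t z − S t c z) + (S z c t − S c z t) + (p − 2) * (S t z c − S z t c) = 0. Then S is symmetric in its first two arguments: S a b c = S b a c for all a, b, c ∈ ι. -/
/-- The permutation argument in Lemma (long-lema) of Section 4: if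
`S_{ctz} - S_{tcz} + S_{zct} - S_{czt} + (p-2)(S_{tzc} - S_{ztc}) = 0` for all
indices and `p ≠ 0, 3`, then `S` is symmetric in its first two arguments. -/
theorem S_symmetric_of_cyclic_relation
    {ι : Type*} (p : ℝ) (hp0 : p ≠ 0) (hp3 : p ≠ 3)
    (S : ι → ι → ι → ℝ)
    (hS : ∀ c t z, (S c t z - S t c z) + (S z c t - S c z t)
      + (p - 2) * (S t z c - S z t c) = 0) :
    ∀ a b c, S a b c = S b a c := by
  intro a b c
  have h1 := hS a b c
  have h2 := hS b c a
  have h3 := hS c a b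
  set X := S a b c - S b a c with hX
  set Y := S b c a - S c b a with hY
  set Z := S c a b - S a c b with hZ
  have e1 : X + Z + (p - 2) * Y = 0 := h1
  have e2 : Y + X + (p - 2) * Z = 0 := h2
  have e3 : Z + Y + (p - 2) * X = 0 := h3
  have hXY : (p - 3) * (X - Y) = 0 := by linarith [e1, e3]
  have hXZ : (p - 3) * (X - Z) = 0 := by linarith [e1, e2]
  have hp3' : p - 3 ≠ 0 := sub_ne_zero.mpr hp3
  have hXY' : X = Y := by
    have := (mul_eq_zero.mp hXY).resolve_left hp3'
    linarith
  have hXZ' : X = Z := by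
    have := (mul_eq_zero.mp hXZ).resolve_left hp3'
    linarith
  have hsum : p * (3 * X) = 0 := by
    have : (X + Z + (p - 2) * Y) + (Y + X + (p - 2) * Z) + (Z + Y + (p - 2) * X) = 0 := by
      rw [e1, e2, e3]; ring
    nlinarith [this, hXY', hXZ']
  have hX0 : X = 0 := by
    rcases mul_eq_zero.mp hsum with h | h
    · exact absurd h hp0
    · linarith
  linarith [hX0]
end

section
/- With the conformally separable metric setup and the leaf projector P below, for every z ∈ ℝ^p × ℝ^q the tensor M satisfies M (inr A) (inl α) (inl β) (z) = −(∂_{inr A} (fun w => Ξ₁ w * G (w.1) α β))(z) and M (inl α) (inr A) (inr B) (z) = (∂_{inl α} (fun w => Ξ₂ w * H (w.2) A B))(z). (These are the component formulas (27) of the paper: M_{A αβ} = −∂_A(Ξ₁ G_{αβ}) and M_{α AB} = ∂_α(Ξ₂ G_{AB}).) -/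
open Sum

/-- Directional derivative along the `a`-th standard basis vector of `ℝ^p × ℝ^q`. -/
noncomputable def pder {p q : ℕ} (a : Fin p ⊕ Fin q)
    (f : ((Fin p → ℝ) × (Fin q → ℝ)) → ℝ) (z : (Fin p → ℝ) × (Fin q → ℝ)) : ℝ :=
  fderiv ℝ f z (Sum.elim (fun α => (Pi.single α 1, 0)) (fun A => (0, Pi.single A 1)) a)


lemma pder_congr {p q : ℕ} (a : Fin p ⊕ Fin q) {f g₀ : ((Fin p → ℝ) × (Fin q → ℝ)) → ℝ}
    (h : ∀ w, f w = g₀ w) (z : (Fin p → ℝ) × (Fin q → ℝ)) : pder a f z = pder a g₀ z := by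
  rw [show f = g₀ from funext h]

lemma pder_zero {p q : ℕ} (a : Fin p ⊕ Fin q) {f : ((Fin p → ℝ) × (Fin q → ℝ)) → ℝ}
    (h : ∀ w, f w = 0) (z : (Fin p → ℝ) × (Fin q → ℝ)) : pder a f z = 0 := by
  rw [show f = fun _ => (0:ℝ) from funext h]
  unfold pder
  rw [fderiv_fun_const]
  simp

/-- The component formulas (27) of the paper for a conformally separable metric:
`M_{Aαβ} = -∂_A(Ξ₁ G_{αβ})` and `M_{αAB} = ∂_α(Ξ₂ G_{AB})`. -/
theorem M_components_conformally_separable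
    {p q : ℕ} (hp : 1 ≤ p) (hq : 1 ≤ q)
    (Ξ₁ Ξ₂ : ((Fin p → ℝ) × (Fin q → ℝ)) → ℝ)
    (hΞ₁ : ContDiff ℝ 2 Ξ₁) (hΞ₂ : ContDiff ℝ 2 Ξ₂)
    (hΞ₁0 : ∀ z, Ξ₁ z ≠ 0) (hΞ₂0 : ∀ z, Ξ₂ z ≠ 0)
    (G : (Fin p → ℝ) → Matrix (Fin p) (Fin p) ℝ)
    (H : (Fin q → ℝ) → Matrix (Fin q) (Fin q) ℝ)
    (hG : ∀ α β, ContDiff ℝ 2 (fun x => G x α β))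
    (hH : ∀ A B, ContDiff ℝ 2 (fun y => H y A B))
    (hGsym : ∀ x, (G x).IsSymm) (hGinv : ∀ x, IsUnit (G x).det)
    (hHsym : ∀ y, (H y).IsSymm) (hHinv : ∀ y, IsUnit (H y).det)
    (g : ((Fin p → ℝ) × (Fin q → ℝ)) → Matrix (Fin p ⊕ Fin q) (Fin p ⊕ Fin q) ℝ)
    (hg₁ : ∀ z α β, g z (inl α) (inl β) = Ξ₁ z * G z.1 α β)
    (hg₂ : ∀ z A B, g z (inr A) (inr B) = Ξ₂ z * H z.2 A B)
    (hg₃ : ∀ z α A, g z (inl α) (inr A) = 0)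
    (hg₄ : ∀ z A α, g z (inr A) (inl α) = 0)
    (Γ : (Fin p ⊕ Fin q) → (Fin p ⊕ Fin q) → (Fin p ⊕ Fin q) →
      ((Fin p → ℝ) × (Fin q → ℝ)) → ℝ)
    (hΓ : ∀ a b c z, Γ a b c z = (1 / 2) * ∑ d, (g z)⁻¹ a d *
      (pder b (fun w => g w d c) z + pder c (fun w => g w d b) z -
        pder d (fun w => g w b c) z))
    (P : ((Fin p → ℝ) × (Fin q → ℝ)) → Matrix (Fin p ⊕ Fin q) (Fin p ⊕ Fin q) ℝ)
    (hP₁ : ∀ z α β, P z (inl α) (inl β) = Ξ₁ z * G z.1 α β)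
    (hP₂ : ∀ z A B, P z (inr A) (inr B) = 0)
    (hP₃ : ∀ z α A, P z (inl α) (inr A) = 0)
    (hP₄ : ∀ z A α, P z (inr A) (inl α) = 0)
    (nab : (Fin p ⊕ Fin q) → (Fin p ⊕ Fin q) → (Fin p ⊕ Fin q) →
      ((Fin p → ℝ) × (Fin q → ℝ)) → ℝ)
    (hnab : ∀ a b c z, nab a b c z = pder a (fun w => P w b c) z
      - (∑ r, Γ r a b z * P z r c) - ∑ r, Γ r a c z * P z b r)
    (M : (Fin p ⊕ Fin q) → (Fin p ⊕ Fin q) → (Fin p ⊕ Fin q) →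
      ((Fin p → ℝ) × (Fin q → ℝ)) → ℝ)
    (hM : ∀ a b c z, M a b c z = nab b a c z + nab c a b z - nab a b c z) :
    (∀ z (A : Fin q) (α β : Fin p), M (inr A) (inl α) (inl β) z =
      -pder (inr A) (fun w => Ξ₁ w * G w.1 α β) z) ∧
    (∀ z (α : Fin p) (A B : Fin q), M (inl α) (inr A) (inr B) z =
      pder (inl α) (fun w => Ξ₂ w * H w.2 A B) z)     := by
  -- g is identically zero on mixed blocks, as functions
  have hmix₁ : ∀ (α : Fin p) (A : Fin q) d z,
      pder d (fun w => g w (inl α) (inr A)) z = 0 :=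
    fun α A d z => pder_zero d (fun w => hg₃ w α A) z
  have hmix₂ : ∀ (A : Fin q) (α : Fin p) d z,
      pder d (fun w => g w (inr A) (inl α)) z = 0 :=
    fun A α d z => pder_zero d (fun w => hg₄ w A α) z
  -- Symmetry of Γ in its two lower indices for mixed lower indices
  have hΓsym : ∀ r (α : Fin p) (A : Fin q) z, Γ r (inl α) (inr A) z = Γ r (inr A) (inl α) z := by
    intro r α A z
    rw [hΓ, hΓ]
    congr 1
    refine Finset.sum_congr rfl fun d _ => ?_
    have h1 : pder d (fun w => g w (inl α) (inr A)) z
        = pder d (fun w => g w (inr A) (inl α)) z := by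
      rw [hmix₁, hmix₂]
    rw [h1]; ring
  -- invertibility of the metric
  have hunit : ∀ z, IsUnit (g z).det := by
    intro z
    have hblock : g z = Matrix.fromBlocks (Ξ₁ z • G z.1) 0 0 (Ξ₂ z • H z.2) := by
      ext i j
      cases i with
      | inl α => cases j with
        | inl β => simpa using hg₁ z α β
        | inr B => simpa using hg₃ z α B
      | inr A => cases j with
        | inl β => simpa using hg₄ z A β
        | inr B => simpa using hg₂ z A B
    rw [hblock, Matrix.det_fromBlocks_zero₁₂, Matrix.det_smul, Matrix.det_smul]
    exact (((isUnit_iff_ne_zero.2 (pow_ne_zero _ (hΞ₁0 z))).mul (hGinv z.1)).mul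
      ((isUnit_iff_ne_zero.2 (pow_ne_zero _ (hΞ₂0 z))).mul (hHinv z.2)))
  have hmul : ∀ z (γ : Fin p) (d : Fin p ⊕ Fin q), (∑ r, g z (inl γ) r * (g z)⁻¹ r d)
      = if (inl γ : Fin p ⊕ Fin q) = d then 1 else 0 := by
    intro z γ d
    have h1 := Matrix.mul_nonsing_inv _ (hunit z)
    have h2 := congrFun (congrFun h1 (inl γ)) d
    rw [Matrix.mul_apply] at h2
    rw [h2, Matrix.one_apply]
  constructor
  · -- first formula
    intro z A α β
    rw [hM, hnab, hnab, hnab]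
    -- kill the trivially vanishing terms
    rw [pder_zero _ (fun w => hP₄ w A β) z, pder_zero _ (fun w => hP₄ w A α) z]
    rw [show (∑ r, Γ r (inl α) (inl β) z * P z (inr A) r) = 0 from
      Finset.sum_eq_zero fun r _ => by rcases r with c | c <;> simp [hP₄, hP₂]]
    rw [show (∑ r, Γ r (inl β) (inl α) z * P z (inr A) r) = 0 from
      Finset.sum_eq_zero fun r _ => by rcases r with c | c <;> simp [hP₄, hP₂]]
    rw [pder_congr (inr A) (fun w => hP₁ w α β) z]
    have e1 : (∑ r, Γ r (inl α) (inr A) z * P z r (inl β))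
        = ∑ γ : Fin p, Γ (inl γ) (inr A) (inl α) z * (Ξ₁ z * G z.1 γ β) := by
      rw [Fintype.sum_sum_type]
      simp [hP₄, hP₁, hΓsym]
    have e2 : (∑ r, Γ r (inl β) (inr A) z * P z r (inl α))
        = ∑ γ : Fin p, Γ (inl γ) (inr A) (inl β) z * (Ξ₁ z * G z.1 α γ) := by
      rw [Fintype.sum_sum_type]
      have : ∀ γ : Fin p, G z.1 γ α = G z.1 α γ := fun γ => (hGsym z.1).apply α γ
      simp [hP₄, hP₁, hΓsym, this]
    have e3 : (∑ r, Γ r (inr A) (inl α) z * P z r (inl β))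
        = ∑ γ : Fin p, Γ (inl γ) (inr A) (inl α) z * (Ξ₁ z * G z.1 γ β) := by
      rw [Fintype.sum_sum_type]; simp [hP₄, hP₁]
    have e4 : (∑ r, Γ r (inr A) (inl β) z * P z (inl α) r)
        = ∑ γ : Fin p, Γ (inl γ) (inr A) (inl β) z * (Ξ₁ z * G z.1 α γ) := by
      rw [Fintype.sum_sum_type]; simp [hP₃, hP₁]
    rw [e1, e2, e3, e4]
    ring
  · -- second formula
    intro z α A B
    -- the key contraction identity
    have key : ∀ (C D : Fin q), (∑ γ : Fin p, (Ξ₁ z * G z.1 α γ) * Γ (inl γ) (inr C) (inr D) z)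
        = -(1/2) * pder (inl α) (fun w => g w (inr C) (inr D)) z := by
      intro C D
      set E : Fin p ⊕ Fin q → ℝ := fun d =>
        pder (inr C) (fun w => g w d (inr D)) z + pder (inr D) (fun w => g w d (inr C)) z -
          pder d (fun w => g w (inr C) (inr D)) z with hE
      have step1 : (∑ γ : Fin p, (Ξ₁ z * G z.1 α γ) * Γ (inl γ) (inr C) (inr D) z)
          = ∑ r, g z (inl α) r * Γ r (inr C) (inr D) z := by
        rw [Fintype.sum_sum_type]
        simp [hg₁, hg₃]
      rw [step1]
      have step2 : (∑ r, g z (inl α) r * Γ r (inr C) (inr D) z)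
          = ∑ r, ∑ d, (1/2) * (g z (inl α) r * (g z)⁻¹ r d * E d) := by
        refine Finset.sum_congr rfl fun r _ => ?_
        rw [hΓ, Finset.mul_sum, Finset.mul_sum]
        refine Finset.sum_congr rfl fun d _ => ?_
        rw [hE]; ring
      rw [step2, Finset.sum_comm]
      have step3 : (∑ d, ∑ r, (1/2) * (g z (inl α) r * (g z)⁻¹ r d * E d))
          = ∑ d, (1/2) * ((∑ r, g z (inl α) r * (g z)⁻¹ r d) * E d) := by
        refine Finset.sum_congr rfl fun d _ => ?_
        rw [Finset.sum_mul, Finset.mul_sum]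
      rw [step3]
      have step4 : (∑ d, (1/2) * ((∑ r, g z (inl α) r * (g z)⁻¹ r d) * E d))
          = (1/2) * E (inl α) := by
        have : ∀ d, (1/2 : ℝ) * ((∑ r, g z (inl α) r * (g z)⁻¹ r d) * E d)
            = if (inl α : Fin p ⊕ Fin q) = d then (1/2) * E d else 0 := by
          intro d
          rw [hmul z α d]
          split <;> simp
        simp_rw [this]
        simp
      rw [step4]
      have hEα : E (inl α) = pder (inr C) (fun w => g w (inl α) (inr D)) z
          + pder (inr D) (fun w => g w (inl α) (inr C)) z
          - pder (inl α) (fun w => g w (inr C) (inr D)) z := rfl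
      rw [hEα, hmix₁ α D (inr C) z, hmix₁ α C (inr D) z]
      ring
    rw [hM, hnab, hnab, hnab]
    rw [pder_zero _ (fun w => hP₃ w α B) z, pder_zero _ (fun w => hP₃ w α A) z,
      pder_zero _ (fun w => hP₂ w A B) z]
    rw [show (∑ r, Γ r (inr A) (inl α) z * P z r (inr B)) = 0 from
      Finset.sum_eq_zero fun r _ => by rcases r with c | c <;> simp [hP₃, hP₂]]
    rw [show (∑ r, Γ r (inr B) (inl α) z * P z r (inr A)) = 0 from
      Finset.sum_eq_zero fun r _ => by rcases r with c | c <;> simp [hP₃, hP₂]]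
    rw [show (∑ r, Γ r (inl α) (inr A) z * P z r (inr B)) = 0 from
      Finset.sum_eq_zero fun r _ => by rcases r with c | c <;> simp [hP₃, hP₂]]
    rw [show (∑ r, Γ r (inl α) (inr B) z * P z (inr A) r) = 0 from
      Finset.sum_eq_zero fun r _ => by rcases r with c | c <;> simp [hP₄, hP₂]]
    have f1 : (∑ r, Γ r (inr A) (inr B) z * P z (inl α) r)
        = ∑ γ : Fin p, (Ξ₁ z * G z.1 α γ) * Γ (inl γ) (inr A) (inr B) z := by
      rw [Fintype.sum_sum_type]
      simp [hP₃, hP₁, mul_comm]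
    have f2 : (∑ r, Γ r (inr B) (inr A) z * P z (inl α) r)
        = ∑ γ : Fin p, (Ξ₁ z * G z.1 α γ) * Γ (inl γ) (inr B) (inr A) z := by
      rw [Fintype.sum_sum_type]
      simp [hP₃, hP₁, mul_comm]
    rw [f1, f2, key A B, key B A]
    have hBA : pder (inl α) (fun w => g w (inr B) (inr A)) z
        = pder (inl α) (fun w => Ξ₂ w * H w.2 A B) z := by
      refine pder_congr _ (fun w => ?_) z
      rw [hg₂]
      rw [(hHsym w.2).apply A B]
    have hAB : pder (inl α) (fun w => g w (inr A) (inr B)) z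
        = pder (inl α) (fun w => Ξ₂ w * H w.2 A B) z :=
      pder_congr _ (fun w => hg₂ w A B) z
    rw [hBA, hAB]
    ring
end

section
/- With the conformally separable metric setup, the leaf projector P, and the tensors M, E, W below, for every z = (x,y) ∈ ℝ^p × ℝ^q one has E (inr A) (z) = −(∂_{inr A} (fun w => det (Matrix.of fun α β => Ξ₁ w * G (w.1) α β)))(z) / det (Matrix.of fun α β => Ξ₁ z * G x α β), and W (inl α) (z) = −(∂_{inl α} (fun w => det (Matrix.of fun A B => Ξ₂ w * H (w.2) A B)))(z) / det (Matrix.of fun A B => Ξ₂ z * H y A B). (These are the formulas E_A = −∂_A log|det(Ξ₁ G_{αβ})| and W_α = −∂_α log|det(Ξ₂ G_{AB})| of equation (27), stated as logarithmic derivatives of the determinants.) -/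
open Sum

open Finset Matrix

theorem fderiv_det_apply {n : ℕ} {E : Type*} [NormedAddCommGroup E] [NormedSpace ℝ E]
    (F : E → Matrix (Fin n) (Fin n) ℝ) (z : E) (v : E)
    (hF : ∀ i j, DifferentiableAt ℝ (fun w => F w i j) z) :
    fderiv ℝ (fun w => (F w).det) z v =
      ∑ i, ∑ k, (F z).adjugate i k * fderiv ℝ (fun w => F w k i) z v := by
  classical
  have hder : HasFDerivAt (fun w => (F w).det)
      (∑ σ : Equiv.Perm (Fin n), ((Equiv.Perm.sign σ : ℤ) : ℝ) •
        (∑ i, (∏ j ∈ univ.erase i, F z (σ j) j) • fderiv ℝ (fun w => F w (σ i) i) z)) z := by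
    have : (fun w => (F w).det) =
        fun w => ∑ σ : Equiv.Perm (Fin n), ((Equiv.Perm.sign σ : ℤ) : ℝ) * ∏ i, F w (σ i) i := by
      funext w; rw [Matrix.det_apply']
    rw [this]
    refine HasFDerivAt.fun_sum fun σ _ => ?_
    have hprod : HasFDerivAt (fun w => ∏ i, F w (σ i) i)
        (∑ i, (∏ j ∈ univ.erase i, F z (σ j) j) • fderiv ℝ (fun w => F w (σ i) i) z) z :=
      HasFDerivAt.finset_prod (fun i _ => (hF (σ i) i).hasFDerivAt)
    simpa using hprod.const_mul (((Equiv.Perm.sign σ : ℤ) : ℝ))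
  rw [hder.fderiv]
  simp only [ContinuousLinearMap.coe_sum', Finset.sum_apply, ContinuousLinearMap.coe_smul',
    Pi.smul_apply, smul_eq_mul]
  -- now: ∑ σ, ε σ * ∑ i, ∏ ... * D (σ i) i = ∑ i ∑ k adj i k * D k i
  set D : Fin n → Fin n → ℝ := fun k i => fderiv ℝ (fun w => F w k i) z v with hD
  have step1 : ∀ i : Fin n,
      ∑ σ : Equiv.Perm (Fin n), ((Equiv.Perm.sign σ : ℤ) : ℝ) *
        ((∏ j ∈ univ.erase i, F z (σ j) j) * D (σ i) i) =
      ((F z).updateCol i (fun k => D k i)).det := by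
    intro i
    rw [Matrix.det_apply']
    refine Finset.sum_congr rfl fun σ _ => ?_
    congr 1
    rw [← Finset.mul_prod_erase univ _ (mem_univ i)]
    rw [Matrix.updateCol_apply, if_pos rfl]
    rw [mul_comm]
    congr 1
    refine Finset.prod_congr rfl fun j hj => ?_
    rw [Matrix.updateCol_apply, if_neg (Finset.ne_of_mem_erase hj)]
  have step2 : ∀ i : Fin n,
      ((F z).updateCol i (fun k => D k i)).det = ∑ k, (F z).adjugate i k * D k i := by
    intro i
    rw [← Matrix.cramer_apply, Matrix.cramer_eq_adjugate_mulVec, Matrix.mulVec,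
      dotProduct]
  calc ∑ σ : Equiv.Perm (Fin n), ((Equiv.Perm.sign σ : ℤ) : ℝ) *
        ∑ i, (∏ j ∈ univ.erase i, F z (σ j) j) * D (σ i) i
      = ∑ i, ∑ σ : Equiv.Perm (Fin n), ((Equiv.Perm.sign σ : ℤ) : ℝ) *
          ((∏ j ∈ univ.erase i, F z (σ j) j) * D (σ i) i) := by
        rw [Finset.sum_comm]
        exact Finset.sum_congr rfl fun σ _ => Finset.mul_sum _ _ _
    _ = ∑ i, ∑ k, (F z).adjugate i k * D k i := by
        exact Finset.sum_congr rfl fun i _ => by rw [step1 i, step2 i]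

noncomputable def B₁mat {p q : ℕ} (Ξ₁ : ((Fin p → ℝ) × (Fin q → ℝ)) → ℝ)
    (G : (Fin p → ℝ) → Matrix (Fin p) (Fin p) ℝ) (w : (Fin p → ℝ) × (Fin q → ℝ)) :
    Matrix (Fin p) (Fin p) ℝ := Matrix.of fun α β => Ξ₁ w * G w.1 α β

noncomputable def B₂mat {p q : ℕ} (Ξ₂ : ((Fin p → ℝ) × (Fin q → ℝ)) → ℝ)
    (H : (Fin q → ℝ) → Matrix (Fin q) (Fin q) ℝ) (w : (Fin p → ℝ) × (Fin q → ℝ)) :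
    Matrix (Fin q) (Fin q) ℝ := Matrix.of fun A B => Ξ₂ w * H w.2 A B

/-- The formulas `E_A = -∂_A log|det(Ξ₁ G_{αβ})|` and `W_α = -∂_α log|det(Ξ₂ G_{AB})|`
of equation (27), stated as logarithmic derivatives of the determinants. -/
theorem E_W_components_conformally_separable
    {p q : ℕ} (hp : 1 ≤ p) (hq : 1 ≤ q)
    (Ξ₁ Ξ₂ : ((Fin p → ℝ) × (Fin q → ℝ)) → ℝ)
    (hΞ₁ : ContDiff ℝ 2 Ξ₁) (hΞ₂ : ContDiff ℝ 2 Ξ₂)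
    (hΞ₁0 : ∀ z, Ξ₁ z ≠ 0) (hΞ₂0 : ∀ z, Ξ₂ z ≠ 0)
    (G : (Fin p → ℝ) → Matrix (Fin p) (Fin p) ℝ)
    (H : (Fin q → ℝ) → Matrix (Fin q) (Fin q) ℝ)
    (hG : ∀ α β, ContDiff ℝ 2 (fun x => G x α β))
    (hH : ∀ A B, ContDiff ℝ 2 (fun y => H y A B))
    (hGsym : ∀ x, (G x).IsSymm) (hGinv : ∀ x, IsUnit (G x).det)
    (hHsym : ∀ y, (H y).IsSymm) (hHinv : ∀ y, IsUnit (H y).det)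
    (g : ((Fin p → ℝ) × (Fin q → ℝ)) → Matrix (Fin p ⊕ Fin q) (Fin p ⊕ Fin q) ℝ)
    (hg₁ : ∀ z α β, g z (inl α) (inl β) = Ξ₁ z * G z.1 α β)
    (hg₂ : ∀ z A B, g z (inr A) (inr B) = Ξ₂ z * H z.2 A B)
    (hg₃ : ∀ z α A, g z (inl α) (inr A) = 0)
    (hg₄ : ∀ z A α, g z (inr A) (inl α) = 0)
    (Γ : (Fin p ⊕ Fin q) → (Fin p ⊕ Fin q) → (Fin p ⊕ Fin q) →
      ((Fin p → ℝ) × (Fin q → ℝ)) → ℝ)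
    (hΓ : ∀ a b c z, Γ a b c z = (1 / 2) * ∑ d, (g z)⁻¹ a d *
      (pder b (fun w => g w d c) z + pder c (fun w => g w d b) z -
        pder d (fun w => g w b c) z))
    (P Pi2 : ((Fin p → ℝ) × (Fin q → ℝ)) → Matrix (Fin p ⊕ Fin q) (Fin p ⊕ Fin q) ℝ)
    (hP₁ : ∀ z α β, P z (inl α) (inl β) = Ξ₁ z * G z.1 α β)
    (hP₂ : ∀ z A B, P z (inr A) (inr B) = 0)
    (hP₃ : ∀ z α A, P z (inl α) (inr A) = 0)
    (hP₄ : ∀ z A α, P z (inr A) (inl α) = 0)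
    (hPi2 : ∀ z, Pi2 z = g z - P z)
    (nab : (Fin p ⊕ Fin q) → (Fin p ⊕ Fin q) → (Fin p ⊕ Fin q) →
      ((Fin p → ℝ) × (Fin q → ℝ)) → ℝ)
    (hnab : ∀ a b c z, nab a b c z = pder a (fun w => P w b c) z
      - (∑ r, Γ r a b z * P z r c) - ∑ r, Γ r a c z * P z b r)
    (M : (Fin p ⊕ Fin q) → (Fin p ⊕ Fin q) → (Fin p ⊕ Fin q) →
      ((Fin p → ℝ) × (Fin q → ℝ)) → ℝ)
    (hM : ∀ a b c z, M a b c z = nab b a c z + nab c a b z - nab a b c z)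
    (E W : (Fin p ⊕ Fin q) → ((Fin p → ℝ) × (Fin q → ℝ)) → ℝ)
    (hE : ∀ a z, E a z = ∑ b, ∑ c, M a b c z * ((g z)⁻¹ * P z * (g z)⁻¹) b c)
    (hW : ∀ a z, W a z = -∑ b, ∑ c, M a b c z * ((g z)⁻¹ * Pi2 z * (g z)⁻¹) b c) :
    (∀ z (A : Fin q), E (inr A) z =
      -(pder (inr A) (fun w => (Matrix.of fun α β => Ξ₁ w * G w.1 α β).det) z)
        / (Matrix.of fun α β => Ξ₁ z * G z.1 α β).det) ∧
    (∀ z (α : Fin p), W (inl α) z =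
      -(pder (inl α) (fun w => (Matrix.of fun A B => Ξ₂ w * H w.2 A B).det) z)
        / (Matrix.of fun A B => Ξ₂ z * H z.2 A B).det) := by
  classical
  have h2 : (2 : WithTop ℕ∞) ≠ 0 := by norm_num
  -- differentiability of block entries
  have dB₁ : ∀ z (α β : Fin p), DifferentiableAt ℝ (fun w => B₁mat Ξ₁ G w α β) z := by
    intro z α β
    exact ((hΞ₁.differentiable h2).differentiableAt).mul
      ((((hG α β).differentiable h2).differentiableAt).comp z differentiableAt_fst)
  have dB₂ : ∀ z (A B : Fin q), DifferentiableAt ℝ (fun w => B₂mat Ξ₂ H w A B) z := by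
    intro z A B
    exact ((hΞ₂.differentiable h2).differentiableAt).mul
      ((((hH A B).differentiable h2).differentiableAt).comp z differentiableAt_snd)
  -- determinants are units
  have hdet₁ : ∀ z, IsUnit (B₁mat Ξ₁ G z).det := by
    intro z
    have hB : B₁mat Ξ₁ G z = Ξ₁ z • G z.1 := by
      ext α β; simp [B₁mat, Matrix.smul_apply]
    rw [hB, Matrix.det_smul]
    exact (IsUnit.pow _ (Ne.isUnit (hΞ₁0 z))).mul (hGinv z.1)
  have hdet₂ : ∀ z, IsUnit (B₂mat Ξ₂ H z).det := by
    intro z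
    have hB : B₂mat Ξ₂ H z = Ξ₂ z • H z.2 := by
      ext A B; simp [B₂mat, Matrix.smul_apply]
    rw [hB, Matrix.det_smul]
    exact (IsUnit.pow _ (Ne.isUnit (hΞ₂0 z))).mul (hHinv z.2)
  -- entry symmetry
  have hGapp : ∀ x (α β : Fin p), G x α β = G x β α := by
    intro x α β
    have := congrFun (congrFun (hGsym x) β) α
    simpa [Matrix.transpose_apply] using this
  have hHapp : ∀ y (A B : Fin q), H y A B = H y B A := by
    intro y A B
    have := congrFun (congrFun (hHsym y) B) A
    simpa [Matrix.transpose_apply] using this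
  -- inverse symmetry
  have hinvsym₁ : ∀ z (α β : Fin p), (B₁mat Ξ₁ G z)⁻¹ α β = (B₁mat Ξ₁ G z)⁻¹ β α := by
    intro z α β
    have ht : (B₁mat Ξ₁ G z)ᵀ = B₁mat Ξ₁ G z := by
      ext a b; simp only [Matrix.transpose_apply, B₁mat, Matrix.of_apply]
      rw [hGapp z.1 b a]
    calc (B₁mat Ξ₁ G z)⁻¹ α β = ((B₁mat Ξ₁ G z)ᵀ)⁻¹ α β := by rw [ht]
      _ = ((B₁mat Ξ₁ G z)⁻¹)ᵀ α β := by rw [Matrix.transpose_nonsing_inv]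
      _ = (B₁mat Ξ₁ G z)⁻¹ β α := rfl
  have hinvsym₂ : ∀ z (A B : Fin q), (B₂mat Ξ₂ H z)⁻¹ A B = (B₂mat Ξ₂ H z)⁻¹ B A := by
    intro z A B
    have ht : (B₂mat Ξ₂ H z)ᵀ = B₂mat Ξ₂ H z := by
      ext a b; simp only [Matrix.transpose_apply, B₂mat, Matrix.of_apply]
      rw [hHapp z.2 b a]
    calc (B₂mat Ξ₂ H z)⁻¹ A B = ((B₂mat Ξ₂ H z)ᵀ)⁻¹ A B := by rw [ht]
      _ = ((B₂mat Ξ₂ H z)⁻¹)ᵀ A B := by rw [Matrix.transpose_nonsing_inv]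
      _ = (B₂mat Ξ₂ H z)⁻¹ B A := rfl
  -- block structure
  have hgblk : ∀ z, g z = Matrix.fromBlocks (B₁mat Ξ₁ G z) 0 0 (B₂mat Ξ₂ H z) := by
    intro z; ext i j
    cases i with
    | inl α => cases j with
      | inl β => simp [hg₁, B₁mat]
      | inr B => simp [hg₃]
    | inr A => cases j with
      | inl β => simp [hg₄]
      | inr B => simp [hg₂, B₂mat]
  have hginv : ∀ z, (g z)⁻¹ = Matrix.fromBlocks (B₁mat Ξ₁ G z)⁻¹ 0 0 (B₂mat Ξ₂ H z)⁻¹ := by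
    intro z
    apply Matrix.inv_eq_right_inv
    rw [hgblk z, Matrix.fromBlocks_multiply]
    simp [Matrix.mul_nonsing_inv _ (hdet₁ z), Matrix.mul_nonsing_inv _ (hdet₂ z),
      Matrix.fromBlocks_one]
  have hPblk : ∀ z, P z = Matrix.fromBlocks (B₁mat Ξ₁ G z) 0 0 0 := by
    intro z; ext i j
    cases i with
    | inl α => cases j with
      | inl β => simp [hP₁, B₁mat]
      | inr B => simp [hP₃]
    | inr A => cases j with
      | inl β => simp [hP₄]
      | inr B => simp [hP₂]
  have hPiblk : ∀ z, Pi2 z = Matrix.fromBlocks 0 0 0 (B₂mat Ξ₂ H z) := by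
    intro z; rw [hPi2, hgblk, hPblk]
    ext i j
    cases i with
    | inl α => cases j with
      | inl β => simp
      | inr B => simp
    | inr A => cases j with
      | inl β => simp
      | inr B => simp
  have hQ : ∀ z, (g z)⁻¹ * P z * (g z)⁻¹ = Matrix.fromBlocks (B₁mat Ξ₁ G z)⁻¹ 0 0 0 := by
    intro z
    rw [hginv z, hPblk z, Matrix.fromBlocks_multiply, Matrix.fromBlocks_multiply]
    simp [Matrix.nonsing_inv_mul _ (hdet₁ z)]
  have hR : ∀ z, (g z)⁻¹ * Pi2 z * (g z)⁻¹ = Matrix.fromBlocks 0 0 0 (B₂mat Ξ₂ H z)⁻¹ := by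
    intro z
    rw [hginv z, hPiblk z, Matrix.fromBlocks_multiply, Matrix.fromBlocks_multiply]
    simp [Matrix.nonsing_inv_mul _ (hdet₂ z)]
  -- pder of constants
  have pzero : ∀ (a : Fin p ⊕ Fin q) z, pder a (fun _ => (0:ℝ)) z = 0 := by
    intro a z; simp [pder]
  -- symmetry of g entries as functions
  have hgsymf : ∀ w (b c : Fin p ⊕ Fin q), g w b c = g w c b := by
    intro w b c
    cases b with
    | inl α => cases c with
      | inl β => rw [hg₁, hg₁, hGapp]
      | inr B => rw [hg₃, hg₄]
    | inr A => cases c with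
      | inl β => rw [hg₄, hg₃]
      | inr B => rw [hg₂, hg₂, hHapp]
  have hΓsym : ∀ (a b c : Fin p ⊕ Fin q) z, Γ a b c z = Γ a c b z := by
    intro a b c z
    rw [hΓ, hΓ]
    congr 1
    refine Finset.sum_congr rfl fun d _ => ?_
    have : (fun w => g w b c) = (fun w => g w c b) := funext fun w => hgsymf w b c
    rw [this]; ring
  -- orthogonality
  have horth : ∀ z (α σ : Fin p),
      ∑ ρ, (Ξ₁ z * G z.1 α ρ) * (B₁mat Ξ₁ G z)⁻¹ ρ σ = (1 : Matrix (Fin p) (Fin p) ℝ) α σ := by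
    intro z α σ
    have h := Matrix.mul_nonsing_inv _ (hdet₁ z)
    have h2 := congrFun (congrFun h α) σ
    rw [Matrix.mul_apply] at h2
    exact h2
  -- adjugate formula
  have hadj₁ : ∀ z, (B₁mat Ξ₁ G z).adjugate = (B₁mat Ξ₁ G z).det • (B₁mat Ξ₁ G z)⁻¹ := by
    intro z
    rw [Matrix.inv_def, smul_smul, Ring.inverse_eq_inv,
      mul_inv_cancel₀ (hdet₁ z).ne_zero, one_smul]
  have hadj₂ : ∀ z, (B₂mat Ξ₂ H z).adjugate = (B₂mat Ξ₂ H z).det • (B₂mat Ξ₂ H z)⁻¹ := by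
    intro z
    rw [Matrix.inv_def, smul_smul, Ring.inverse_eq_inv,
      mul_inv_cancel₀ (hdet₂ z).ne_zero, one_smul]
  constructor
  · -- E part
    intro z A
    show E (inr A) z = -(pder (inr A) (fun w => (B₁mat Ξ₁ G w).det) z) / (B₁mat Ξ₁ G z).det
    have hMval : ∀ (β γ : Fin p), M (inr A) (inl β) (inl γ) z
        = -pder (inr A) (fun w => B₁mat Ξ₁ G w β γ) z := by
      intro β γ
      have e1 : (fun w => P w (inr A) (inl γ)) = (fun _ => (0:ℝ)) := funext fun w => hP₄ w A γ
      have e2 : (fun w => P w (inr A) (inl β)) = (fun _ => (0:ℝ)) := funext fun w => hP₄ w A β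
      have e3 : (fun w => P w (inl β) (inl γ)) = (fun w => B₁mat Ξ₁ G w β γ) :=
        funext fun w => hP₁ w β γ
      rw [hM, hnab, hnab, hnab, e1, e2, e3]
      simp only [Fintype.sum_sum_type, hP₁, hP₂, hP₃, hP₄, mul_zero, Finset.sum_const_zero,
        add_zero, sub_zero, pzero, zero_sub]
      have s1 : ∑ ρ, Γ (inl ρ) (inl β) (inr A) z * (Ξ₁ z * G z.1 ρ γ)
          = ∑ ρ, Γ (inl ρ) (inr A) (inl β) z * (Ξ₁ z * G z.1 ρ γ) :=
        Finset.sum_congr rfl fun ρ _ => by rw [hΓsym]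
      have s2 : ∑ ρ, Γ (inl ρ) (inl γ) (inr A) z * (Ξ₁ z * G z.1 ρ β)
          = ∑ ρ, Γ (inl ρ) (inr A) (inl γ) z * (Ξ₁ z * G z.1 β ρ) :=
        Finset.sum_congr rfl fun ρ _ => by rw [hΓsym, hGapp z.1 ρ β]
      rw [s1, s2]; ring
    rw [hE]
    simp only [Fintype.sum_sum_type, hQ z, Matrix.fromBlocks_apply₁₁, Matrix.fromBlocks_apply₁₂,
      Matrix.fromBlocks_apply₂₁, Matrix.fromBlocks_apply₂₂, Matrix.zero_apply, mul_zero,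
      Finset.sum_const_zero, add_zero]
    have hjac : pder (inr A) (fun w => (B₁mat Ξ₁ G w).det) z
        = ∑ i, ∑ k, (B₁mat Ξ₁ G z).adjugate i k * pder (inr A) (fun w => B₁mat Ξ₁ G w k i) z := by
      simp only [pder]
      exact fderiv_det_apply _ _ _ (fun i j => dB₁ z i j)
    have hmain : ∑ i, ∑ k, (B₁mat Ξ₁ G z).adjugate i k
          * pder (inr A) (fun w => B₁mat Ξ₁ G w k i) z
        = (B₁mat Ξ₁ G z).det * ∑ β, ∑ γ, pder (inr A) (fun w => B₁mat Ξ₁ G w β γ) z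
          * (B₁mat Ξ₁ G z)⁻¹ β γ := by
      rw [hadj₁ z, Finset.mul_sum, Finset.sum_comm]
      refine Finset.sum_congr rfl fun β _ => ?_
      rw [Finset.mul_sum]
      refine Finset.sum_congr rfl fun γ _ => ?_
      simp only [Matrix.smul_apply, smul_eq_mul]
      rw [hinvsym₁ z γ β]; ring
    have hsum : ∑ β, ∑ γ, M (inr A) (inl β) (inl γ) z * (B₁mat Ξ₁ G z)⁻¹ β γ
        = -∑ β, ∑ γ, pder (inr A) (fun w => B₁mat Ξ₁ G w β γ) z * (B₁mat Ξ₁ G z)⁻¹ β γ := by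
      rw [← Finset.sum_neg_distrib]
      refine Finset.sum_congr rfl fun β _ => ?_
      rw [← Finset.sum_neg_distrib]
      refine Finset.sum_congr rfl fun γ _ => ?_
      rw [hMval]; ring
    rw [hsum, hjac, hmain, neg_div, mul_div_cancel_left₀ _ (hdet₁ z).ne_zero]
  · -- W part
    intro z α
    show W (inl α) z = -(pder (inl α) (fun w => (B₂mat Ξ₂ H w).det) z) / (B₂mat Ξ₂ H z).det
    have hΓexp : ∀ (ρ : Fin p) (B C : Fin q), Γ (inl ρ) (inr B) (inr C) z
        = -(1/2) * ∑ σ, (B₁mat Ξ₁ G z)⁻¹ ρ σ * pder (inl σ) (fun w => B₂mat Ξ₂ H w B C) z := by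
      intro ρ B C
      rw [hΓ, Fintype.sum_sum_type]
      have z3 : ∀ (σ : Fin p) (C' : Fin q),
          (fun w => g w (inl σ) (inr C')) = (fun _ => (0:ℝ)) :=
        fun σ C' => funext fun w => hg₃ w σ C'
      have z2 : (fun w => g w (inr B) (inr C)) = (fun w => B₂mat Ξ₂ H w B C) :=
        funext fun w => hg₂ w B C
      simp only [hginv z, Matrix.fromBlocks_apply₁₁, Matrix.fromBlocks_apply₁₂,
        Matrix.zero_apply, zero_mul, Finset.sum_const_zero, add_zero, z3, z2, pzero, zero_add]
      rw [Finset.mul_sum, neg_mul, Finset.mul_sum, ← Finset.sum_neg_distrib]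
      refine Finset.sum_congr rfl fun σ _ => ?_
      ring
    have hMval : ∀ (B C : Fin q), M (inl α) (inr B) (inr C) z
        = pder (inl α) (fun w => B₂mat Ξ₂ H w B C) z := by
      intro B C
      have e1 : (fun w => P w (inl α) (inr C)) = (fun _ => (0:ℝ)) := funext fun w => hP₃ w α C
      have e2 : (fun w => P w (inl α) (inr B)) = (fun _ => (0:ℝ)) := funext fun w => hP₃ w α B
      have e3 : (fun w => P w (inr B) (inr C)) = (fun _ => (0:ℝ)) := funext fun w => hP₂ w B C
      rw [hM, hnab, hnab, hnab, e1, e2, e3]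
      simp only [Fintype.sum_sum_type, hP₁, hP₂, hP₃, hP₄, mul_zero, Finset.sum_const_zero,
        add_zero, sub_zero, pzero, zero_sub, sub_self]
      have hK : ∀ (B' C' : Fin q), ∑ ρ, Γ (inl ρ) (inr B') (inr C') z * (Ξ₁ z * G z.1 α ρ)
          = -(1/2) * pder (inl α) (fun w => B₂mat Ξ₂ H w B' C') z := by
        intro B' C'
        have step : ∑ ρ, Γ (inl ρ) (inr B') (inr C') z * (Ξ₁ z * G z.1 α ρ)
            = -(1/2) * ∑ σ, (∑ ρ, (Ξ₁ z * G z.1 α ρ) * (B₁mat Ξ₁ G z)⁻¹ ρ σ)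
              * pder (inl σ) (fun w => B₂mat Ξ₂ H w B' C') z := by
          simp only [hΓexp, Finset.sum_mul, Finset.mul_sum]
          rw [Finset.sum_comm]
          exact Finset.sum_congr rfl fun σ _ => Finset.sum_congr rfl fun ρ _ => by ring
        rw [step]
        congr 1
        calc ∑ σ, (∑ ρ, (Ξ₁ z * G z.1 α ρ) * (B₁mat Ξ₁ G z)⁻¹ ρ σ)
              * pder (inl σ) (fun w => B₂mat Ξ₂ H w B' C') z
            = ∑ σ, (if α = σ then (1:ℝ) else 0)
              * pder (inl σ) (fun w => B₂mat Ξ₂ H w B' C') z :=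
              Finset.sum_congr rfl fun σ _ => by rw [horth z α σ, Matrix.one_apply]
          _ = pder (inl α) (fun w => B₂mat Ξ₂ H w B' C') z := by
              simp only [ite_mul, one_mul, zero_mul]
              rw [Finset.sum_ite_eq]
              simp
      have s1 : ∑ ρ, Γ (inl ρ) (inr C) (inr B) z * (Ξ₁ z * G z.1 α ρ)
          = ∑ ρ, Γ (inl ρ) (inr B) (inr C) z * (Ξ₁ z * G z.1 α ρ) :=
        Finset.sum_congr rfl fun ρ _ => by rw [hΓsym]
      rw [s1, hK B C]; ring
    rw [hW]
    simp only [Fintype.sum_sum_type, hR z, Matrix.fromBlocks_apply₁₁, Matrix.fromBlocks_apply₁₂,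
      Matrix.fromBlocks_apply₂₁, Matrix.fromBlocks_apply₂₂, Matrix.zero_apply, mul_zero,
      Finset.sum_const_zero, zero_add, add_zero]
    have hjac : pder (inl α) (fun w => (B₂mat Ξ₂ H w).det) z
        = ∑ i, ∑ k, (B₂mat Ξ₂ H z).adjugate i k * pder (inl α) (fun w => B₂mat Ξ₂ H w k i) z := by
      simp only [pder]
      exact fderiv_det_apply _ _ _ (fun i j => dB₂ z i j)
    have hmain : ∑ i, ∑ k, (B₂mat Ξ₂ H z).adjugate i k
          * pder (inl α) (fun w => B₂mat Ξ₂ H w k i) z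
        = (B₂mat Ξ₂ H z).det * ∑ B, ∑ C, pder (inl α) (fun w => B₂mat Ξ₂ H w B C) z
          * (B₂mat Ξ₂ H z)⁻¹ B C := by
      rw [hadj₂ z, Finset.mul_sum, Finset.sum_comm]
      refine Finset.sum_congr rfl fun B _ => ?_
      rw [Finset.mul_sum]
      refine Finset.sum_congr rfl fun C _ => ?_
      simp only [Matrix.smul_apply, smul_eq_mul]
      rw [hinvsym₂ z C B]; ring
    have hsum : ∑ B, ∑ C, M (inl α) (inr B) (inr C) z * (B₂mat Ξ₂ H z)⁻¹ B C
        = ∑ B, ∑ C, pder (inl α) (fun w => B₂mat Ξ₂ H w B C) z * (B₂mat Ξ₂ H z)⁻¹ B C := by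
      refine Finset.sum_congr rfl fun B _ => Finset.sum_congr rfl fun C _ => ?_
      rw [hMval]
    rw [hsum, hjac, hmain, neg_div, mul_div_cancel_left₀ _ (hdet₂ z).ne_zero]
end

section
/- Let p, q ≥ 1, ι = Fin p ⊕ Fin q, and let Γ : (ℝ^p × ℝ^q) → ι → ι → ι → ℝ be a differentiable family of connection coefficients, symmetric in its last two indices (Γ a b c = Γ a c b), such that Γ a b c (z) = 0 unless a, b, c all lie in the first summand (Fin p) or all lie in the second summand (Fin q). Define the curvature by R a b c d (z) := (∂_c Γ a d b)(z) − (∂_d Γ a c b)(z) + Σ_r Γ a r c (z) * Γ r d b (z) − Σ_r Γ a r d (z) * Γ r c b (z), where ∂_a is the directional derivative along the a-th standard basis vector of ℝ^p × ℝ^q. Then for all indices and all z: (i) R (inl α) (inl β) (inr F) (inl φ) (z) = (∂_{inr F} Γ (inl α) (inl φ) (inl β))(z); (ii) R (inl α) (inl β) (inr C) (inr D) (z) = 0; and (iii) R (inl α) (inr B) c d (z) = 0 for all c, d. -/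
open Sum

/-- Block structure of the curvature of a block-diagonal symmetric connection:
`R^α_{βFφ} = ∂_F Γ^α_{φβ}`, and the components `R^α_{βCD}` and `R^α_{Bcd}` vanish. -/
theorem curvature_block_structure
    {p q : ℕ} (hp : 1 ≤ p) (hq : 1 ≤ q)
    (Γ : (Fin p ⊕ Fin q) → (Fin p ⊕ Fin q) → (Fin p ⊕ Fin q) →
      ((Fin p → ℝ) × (Fin q → ℝ)) → ℝ)
    (hdiff : ∀ a b c, Differentiable ℝ (fun z => Γ a b c z))
    (hsymm : ∀ a b c z, Γ a b c z = Γ a c b z)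
    (hblock : ∀ a b c z,
      ¬((∃ (α β γ : Fin p), a = inl α ∧ b = inl β ∧ c = inl γ) ∨
        (∃ (A B C : Fin q), a = inr A ∧ b = inr B ∧ c = inr C)) → Γ a b c z = 0)
    (R : (Fin p ⊕ Fin q) → (Fin p ⊕ Fin q) → (Fin p ⊕ Fin q) → (Fin p ⊕ Fin q) →
      ((Fin p → ℝ) × (Fin q → ℝ)) → ℝ)
    (hR : ∀ a b c d z, R a b c d z =
      pder c (fun w => Γ a d b w) z - pder d (fun w => Γ a c b w) z +
      (∑ r, Γ a r c z * Γ r d b z) - ∑ r, Γ a r d z * Γ r c b z) :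
    (∀ (α β : Fin p) (F : Fin q) (φ : Fin p) z,
      R (inl α) (inl β) (inr F) (inl φ) z = pder (inr F) (fun w => Γ (inl α) (inl φ) (inl β) w) z) ∧
    (∀ (α β : Fin p) (C D : Fin q) z, R (inl α) (inl β) (inr C) (inr D) z = 0) ∧
    (∀ (α : Fin p) (B : Fin q) (c d : Fin p ⊕ Fin q) z,
      R (inl α) (inr B) c d z = 0) := by
  -- mixed components of Γ vanish
  have hmix : ∀ (a b c : Fin p ⊕ Fin q) z,
      (a.isLeft ≠ b.isLeft ∨ a.isLeft ≠ c.isLeft) → Γ a b c z = 0 := by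
    rintro a b c z h
    apply hblock a b c z
    rintro (⟨x,y,w,h1,h2,h3⟩|⟨x,y,w,h1,h2,h3⟩) <;> subst h1 <;> subst h2 <;> subst h3 <;>
      simp at h
  have hpz : ∀ (a : Fin p ⊕ Fin q) z, pder a (fun _ => (0:ℝ)) z = 0 := by
    intro a z; simp [pder]
  refine ⟨?_, ?_, ?_⟩
  · intro α β F φ z
    rw [hR]
    have h1 : (fun w => Γ (inl α) (inr F) (inl β) w) = fun _ => (0:ℝ) := by
      funext w; exact hmix _ _ _ w (Or.inl (by simp))
    have h2 : ∀ r, Γ (inl α) r (inr F) z * Γ r (inl φ) (inl β) z = 0 := by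
      intro r; rw [hmix _ _ _ z (Or.inr (by simp)), zero_mul]
    have h3 : ∀ r, Γ (inl α) r (inl φ) z * Γ r (inr F) (inl β) z = 0 := by
      intro r
      rcases r with γ | C
      · rw [hmix (inl γ) _ _ z (Or.inl (by simp)), mul_zero]
      · rw [hmix _ (inr C) _ z (Or.inl (by simp)), zero_mul]
    rw [h1, hpz, Finset.sum_eq_zero (fun r _ => h2 r), Finset.sum_eq_zero (fun r _ => h3 r)]
    ring
  · intro α β C D z
    rw [hR]
    have h1 : (fun w => Γ (inl α) (inr D) (inl β) w) = fun _ => (0:ℝ) := by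
      funext w; exact hmix _ _ _ w (Or.inl (by simp))
    have h1' : (fun w => Γ (inl α) (inr C) (inl β) w) = fun _ => (0:ℝ) := by
      funext w; exact hmix _ _ _ w (Or.inl (by simp))
    have h2 : ∀ r, Γ (inl α) r (inr C) z * Γ r (inr D) (inl β) z = 0 := by
      intro r; rw [hmix _ _ _ z (Or.inr (by simp)), zero_mul]
    have h3 : ∀ r, Γ (inl α) r (inr D) z * Γ r (inr C) (inl β) z = 0 := by
      intro r; rw [hmix _ _ _ z (Or.inr (by simp)), zero_mul]
    rw [h1, h1', hpz, hpz, Finset.sum_eq_zero (fun r _ => h2 r),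
      Finset.sum_eq_zero (fun r _ => h3 r)]
    ring
  · intro α B c d z
    rw [hR]
    have h1 : ∀ (x : Fin p ⊕ Fin q), (fun w => Γ (inl α) x (inr B) w) = fun _ => (0:ℝ) := by
      intro x; funext w; exact hmix _ _ _ w (Or.inr (by simp))
    rw [Finset.sum_eq_zero, Finset.sum_eq_zero]
    · rw [h1 d, h1 c, hpz, hpz]; ring
    · intro r _
      rcases r with γ | E
      · rw [hmix (inl γ) _ (inr B) z (Or.inr (by simp)), mul_zero]
      · rw [hmix _ (inr E) _ z (Or.inl (by simp)), zero_mul]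
    · intro r _
      rcases r with γ | E
      · rw [hmix (inl γ) _ (inr B) z (Or.inr (by simp)), mul_zero]
      · rw [hmix _ (inr E) _ z (Or.inl (by simp)), zero_mul]
end
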